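/- Let g be a finite-dimensional classical Lie superalgebra over ℂ. Then the odd part of the radical of g equals {X ∈ g₁ | [X, g₁] ⊆ z(g)₀}, where z(g) is the center of g. -/
import Mathlib


/-- The odd data of a complex Lie superalgebra `g = g₀ ⊕ g₁`, where the even part `g₀` is a
complex Lie algebra: the brackets `b01 : g₀ × g₁ → g₁` and `b11 : g₁ × g₁ → g₀`, subject to
the super-Jacobi identities. -/
structure SuperStructure (g0 g1 : Type*) [LieRing g0] [LieAlgebra ℂ g0]
    [AddCommGroup g1] [Module ℂ g1] where
  b01 : g0 →ₗ[ℂ] g1 →ₗ[ℂ] g1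
  b11 : g1 →ₗ[ℂ] g1 →ₗ[ℂ] g0
  symm11 : ∀ u v, b11 u v = b11 v u
  jacobi001 : ∀ x y v, b01 ⁅x, y⁆ v = b01 x (b01 y v) - b01 y (b01 x v)
  jacobi011 : ∀ x u v, ⁅x, b11 u v⁆ = b11 (b01 x u) v + b11 u (b01 x v)
  jacobi111 : ∀ u v w, b01 (b11 u v) w + b01 (b11 v w) u + b01 (b11 w u) v = 0

variable {g0 g1 : Type*} [LieRing g0] [LieAlgebra ℂ g0] [AddCommGroup g1] [Module ℂ g1]

/-- A (graded) ideal `I = I₀ ⊕ I₁` of the Lie superalgebra `g = g₀ ⊕ g₁`. -/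
structure SuperIdeal (S : SuperStructure g0 g1) where
  even : Submodule ℂ g0
  odd : Submodule ℂ g1
  lie00 : ∀ (x : g0), ∀ y ∈ even, ⁅x, y⁆ ∈ even
  lie01 : ∀ (x : g0), ∀ v ∈ odd, S.b01 x v ∈ odd
  lie11 : ∀ (u : g1), ∀ v ∈ odd, S.b11 u v ∈ even
  lie10 : ∀ x ∈ even, ∀ (v : g1), S.b01 x v ∈ odd

/-- The derived pair `[p, p]` of a pair of subspaces `p = (p₀, p₁)` of `(g₀, g₁)`. -/
def derivedPair (S : SuperStructure g0 g1) (p : Submodule ℂ g0 × Submodule ℂ g1) :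
    Submodule ℂ g0 × Submodule ℂ g1 :=
  (Submodule.span ℂ ({z | ∃ x ∈ p.1, ∃ y ∈ p.1, ⁅x, y⁆ = z} ∪
      {z | ∃ u ∈ p.2, ∃ v ∈ p.2, S.b11 u v = z}),
   Submodule.span ℂ {w | ∃ x ∈ p.1, ∃ v ∈ p.2, S.b01 x v = w})

/-- A super ideal is solvable if its derived series terminates at zero. -/
def IsSolvableIdeal (S : SuperStructure g0 g1) (I : SuperIdeal S) : Prop :=
  ∃ k, (derivedPair S)^[k] (I.even, I.odd) = (⊥, ⊥)

namespace Stmt7Aux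

/-- The span of all brackets of two elements of a subspace of `g₀`. -/
def bracketSpan : Submodule ℂ g0 → Submodule ℂ g0 := fun J =>
  Submodule.span ℂ {z | ∃ x ∈ J, ∃ y ∈ J, ⁅x, y⁆ = z}

lemma bracketSpan_mono {J K : Submodule ℂ g0} (h : J ≤ K) : bracketSpan J ≤ bracketSpan K :=
  Submodule.span_mono (fun _ hz => by
    obtain ⟨x, hx, y, hy, e⟩ := hz
    exact ⟨x, h hx, y, h hy, e⟩)

/-- In a Lie algebra whose adjoint representation is completely reducible, every solvable
ideal is central. -/
lemma central_of_solvable (hcr0 : ∀ W : LieSubmodule ℂ g0 g0, ∃ W', IsCompl W W') :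
    ∀ k : ℕ, ∀ J : Submodule ℂ g0, (∀ z : g0, ∀ y ∈ J, ⁅z, y⁆ ∈ J) →
      bracketSpan^[k] J = ⊥ → ∀ x ∈ J, ∀ z : g0, ⁅x, z⁆ = 0 := by
  intro k
  induction k with
  | zero =>
    intro J _ hJ x hx z
    simp only [Function.iterate_zero, id_eq] at hJ
    rw [hJ, Submodule.mem_bot] at hx
    rw [hx, zero_lie]
  | succ k ih =>
    intro J hJid hJk x hx z
    set D := bracketSpan J with hD
    have hDid : ∀ z : g0, ∀ a ∈ D, ⁅z, a⁆ ∈ D := by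
      intro z a ha
      induction ha using Submodule.span_induction with
      | mem a h =>
        obtain ⟨x, hx, y, hy, rfl⟩ := h
        rw [leibniz_lie]
        exact add_mem (Submodule.subset_span ⟨⁅z, x⁆, hJid z x hx, y, hy, rfl⟩)
          (Submodule.subset_span ⟨x, hx, ⁅z, y⁆, hJid z y hy, rfl⟩)
      | zero => simp
      | add a b _ _ pa pb => rw [lie_add]; exact add_mem pa pb
      | smul c a _ pa => rw [lie_smul]; exact Submodule.smul_mem _ _ pa
    have hDc : ∀ x ∈ D, ∀ z : g0, ⁅x, z⁆ = 0 := by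
      apply ih D hDid
      rw [← Function.iterate_succ_apply]
      exact hJk
    -- Step 1: `J` is abelian.
    have habel : ∀ a ∈ J, ∀ b ∈ J, ⁅a, b⁆ = (0 : g0) := by
      let DL : LieSubmodule ℂ g0 g0 := ⟨D, fun {x m} hm => hDid x m hm⟩
      obtain ⟨W, hW⟩ := hcr0 DL
      intro a ha b hb
      have hmemD : ⁅a, b⁆ ∈ DL := Submodule.subset_span ⟨a, ha, b, hb, rfl⟩
      have hamem : a ∈ DL ⊔ W := by rw [hW.sup_eq_top]; trivial
      have hbmem : b ∈ DL ⊔ W := by rw [hW.sup_eq_top]; trivial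
      rw [LieSubmodule.mem_sup] at hamem hbmem
      obtain ⟨d, hd, w, hw, hdw⟩ := hamem
      obtain ⟨d', hd', w', hw', hd'w'⟩ := hbmem
      have h3 : ⁅w, d'⁆ = (0 : g0) := by rw [← lie_skew, hDc d' hd' w, neg_zero]
      have key : ⁅a, b⁆ = ⁅w, w'⁆ := by
        rw [← hdw, ← hd'w', add_lie, lie_add, lie_add, hDc d hd d', hDc d hd w', h3]
        abel
      have hmemW : ⁅a, b⁆ ∈ W := by rw [key]; exact W.lie_mem hw'
      have hbot : ⁅a, b⁆ ∈ (⊥ : LieSubmodule ℂ g0 g0) :=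
        hW.disjoint.le_bot ((LieSubmodule.mem_inf _ _ _).mpr ⟨hmemD, hmemW⟩)
      rwa [LieSubmodule.mem_bot] at hbot
    -- Step 2: `J` is central.
    let JL : LieSubmodule ℂ g0 g0 := ⟨J, fun {u m} hm => hJid u m hm⟩
    obtain ⟨W₂, hW₂⟩ := hcr0 JL
    have hzmem : z ∈ JL ⊔ W₂ := by rw [hW₂.sup_eq_top]; trivial
    rw [LieSubmodule.mem_sup] at hzmem
    obtain ⟨j, hj, w, hw, hjw⟩ := hzmem
    have h1 : ⁅x, j⁆ = (0 : g0) := habel x hx j hj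
    have h2 : ⁅x, w⁆ ∈ W₂ := W₂.lie_mem hw
    have h2' : ⁅x, w⁆ ∈ JL := by
      have : ⁅w, x⁆ ∈ J := hJid w x hx
      rw [← lie_skew]
      exact neg_mem this
    have hbot : ⁅x, w⁆ ∈ (⊥ : LieSubmodule ℂ g0 g0) :=
      hW₂.disjoint.le_bot ((LieSubmodule.mem_inf _ _ _).mpr ⟨h2', h2⟩)
    rw [LieSubmodule.mem_bot] at hbot
    rw [← hjw, lie_add, h1, hbot, add_zero]

lemma bracketSpan_le_derived (S : SuperStructure g0 g1)
    (q : Submodule ℂ g0 × Submodule ℂ g1) :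
    bracketSpan q.1 ≤ (derivedPair S q).1 :=
  Submodule.span_mono Set.subset_union_left

lemma evenSolv (S : SuperStructure g0 g1) :
    ∀ k : ℕ, ∀ p : Submodule ℂ g0 × Submodule ℂ g1,
      bracketSpan^[k] p.1 ≤ ((derivedPair S)^[k] p).1 := by
  intro k
  induction k with
  | zero => intro p; exact le_rfl
  | succ k ih =>
    intro p
    rw [Function.iterate_succ_apply', Function.iterate_succ_apply']
    calc bracketSpan (bracketSpan^[k] p.1)
        ≤ bracketSpan (((derivedPair S)^[k] p).1) := bracketSpan_mono (ih p)
      _ ≤ (derivedPair S ((derivedPair S)^[k] p)).1 := bracketSpan_le_derived S _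

/-- The derived ideal of a super ideal. -/
def derivedIdeal (S : SuperStructure g0 g1) (I : SuperIdeal S) : SuperIdeal S where
  even := (derivedPair S (I.even, I.odd)).1
  odd := (derivedPair S (I.even, I.odd)).2
  lie00 := by
    intro z a ha
    induction ha using Submodule.span_induction with
    | mem a h =>
      rcases h with h | h
      · obtain ⟨x, hx, y, hy, rfl⟩ := h
        rw [leibniz_lie]
        exact add_mem (Submodule.subset_span (Or.inl ⟨⁅z, x⁆, I.lie00 z x hx, y, hy, rfl⟩))
          (Submodule.subset_span (Or.inl ⟨x, hx, ⁅z, y⁆, I.lie00 z y hy, rfl⟩))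
      · obtain ⟨u, hu, v, hv, rfl⟩ := h
        rw [S.jacobi011]
        exact add_mem (Submodule.subset_span (Or.inr ⟨_, I.lie01 z u hu, v, hv, rfl⟩))
          (Submodule.subset_span (Or.inr ⟨u, hu, _, I.lie01 z v hv, rfl⟩))
    | zero => simp
    | add a b _ _ pa pb => rw [lie_add]; exact add_mem pa pb
    | smul c a _ pa => rw [lie_smul]; exact Submodule.smul_mem _ _ pa
  lie01 := by
    intro z a ha
    induction ha using Submodule.span_induction with
    | mem a h =>
      obtain ⟨x, hx, v, hv, rfl⟩ := h
      have hkey : S.b01 z (S.b01 x v) = S.b01 ⁅z, x⁆ v + S.b01 x (S.b01 z v) := by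
        rw [S.jacobi001]; abel
      rw [hkey]
      exact add_mem (Submodule.subset_span ⟨_, I.lie00 z x hx, v, hv, rfl⟩)
        (Submodule.subset_span ⟨x, hx, _, I.lie01 z v hv, rfl⟩)
    | zero => simp
    | add a b _ _ pa pb => rw [map_add]; exact add_mem pa pb
    | smul c a _ pa => rw [map_smul]; exact Submodule.smul_mem _ _ pa
  lie11 := by
    intro u a ha
    induction ha using Submodule.span_induction with
    | mem a h =>
      obtain ⟨x, hx, v, hv, rfl⟩ := h
      have hkey : S.b11 u (S.b01 x v) = ⁅x, S.b11 u v⁆ - S.b11 (S.b01 x u) v := by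
        rw [S.jacobi011]; abel
      rw [hkey]
      refine sub_mem ?_ ?_
      · exact Submodule.subset_span (Or.inl ⟨x, hx, _, I.lie11 u v hv, rfl⟩)
      · exact Submodule.subset_span (Or.inr ⟨_, I.lie10 x hx u, v, hv, rfl⟩)
    | zero => simp
    | add a b _ _ pa pb => rw [map_add]; exact add_mem pa pb
    | smul c a _ pa => rw [map_smul]; exact Submodule.smul_mem _ _ pa
  lie10 := by
    intro a ha v
    induction ha using Submodule.span_induction with
    | mem a h =>
      rcases h with h | h
      · obtain ⟨x, hx, y, hy, rfl⟩ := h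
        rw [S.jacobi001]
        refine sub_mem ?_ ?_
        · exact Submodule.subset_span ⟨x, hx, _, I.lie10 y hy v, rfl⟩
        · exact Submodule.subset_span ⟨y, hy, _, I.lie10 x hx v, rfl⟩
      · obtain ⟨u, hu, w, hw, rfl⟩ := h
        have h3 := S.jacobi111 u w v
        rw [add_assoc] at h3
        have hA : S.b01 (S.b11 u w) v
            = -(S.b01 (S.b11 w v) u + S.b01 (S.b11 v u) w) :=
          eq_neg_of_add_eq_zero_left h3
        rw [hA]
        have hwv : S.b11 w v ∈ I.even := by rw [S.symm11]; exact I.lie11 v w hw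
        refine neg_mem (add_mem ?_ ?_)
        · exact Submodule.subset_span ⟨_, hwv, u, hu, rfl⟩
        · exact Submodule.subset_span ⟨_, I.lie11 v u hu, w, hw, rfl⟩
    | zero => simp
    | add a b _ _ pa pb =>
      rw [map_add, LinearMap.add_apply]; exact add_mem pa pb
    | smul c a _ pa =>
      rw [map_smul, LinearMap.smul_apply]; exact Submodule.smul_mem _ _ pa

/-- Given `hcr1` (complete reducibility of `g₁`), the action of any element of `g₀` which is
central in `g₀` is a semisimple operator on `g₁`: generalized eigenvectors are eigenvectors. -/
lemma semisimple_op (S : SuperStructure g0 g1)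
    (hcr1 : ∀ W : Submodule ℂ g1, (∀ (x : g0), ∀ v ∈ W, S.b01 x v ∈ W) →
      ∃ W' : Submodule ℂ g1, (∀ (x : g0), ∀ v ∈ W', S.b01 x v ∈ W') ∧ IsCompl W W')
    (x : g0) (hx : ∀ z : g0, ⁅x, z⁆ = 0) :
    ∀ (lam : ℂ) (j : ℕ) (w : g1),
      (((S.b01 x : Module.End ℂ g1) - lam • 1) ^ j) w = 0 →
      ((S.b01 x : Module.End ℂ g1) - lam • 1) w = 0 := by
  have hcomm : ∀ (y : g0) (v : g1), S.b01 x (S.b01 y v) = S.b01 y (S.b01 x v) := by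
    intro y v
    have h := S.jacobi001 y x v
    have hyx : ⁅y, x⁆ = (0 : g0) := by rw [← lie_skew, hx y, neg_zero]
    rw [hyx] at h
    have h0 : S.b01 (0 : g0) v = 0 := by rw [map_zero, LinearMap.zero_apply]
    rw [h0] at h
    exact (sub_eq_zero.mp h.symm).symm
  intro lam
  set B : Module.End ℂ g1 := (S.b01 x : Module.End ℂ g1) - lam • 1 with hB
  have hBapp : ∀ w : g1, B w = S.b01 x w - lam • w := by
    intro w
    rw [hB, LinearMap.sub_apply, LinearMap.smul_apply, Module.End.one_apply]
  set U : Submodule ℂ g1 := LinearMap.ker B with hU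
  have hUinv : ∀ (y : g0), ∀ v ∈ U, S.b01 y v ∈ U := by
    intro y v hv
    rw [hU, LinearMap.mem_ker] at hv ⊢
    rw [hBapp] at hv ⊢
    rw [hcomm y v, ← map_smul, ← map_sub, hv, map_zero]
  obtain ⟨W', hW'inv, hcompl⟩ := hcr1 U hUinv
  have hW'B : ∀ v ∈ W', B v ∈ W' := by
    intro v hv
    rw [hBapp]
    exact sub_mem (hW'inv x v hv) (Submodule.smul_mem _ _ hv)
  intro j
  induction j with
  | zero =>
    intro w hw
    rw [pow_zero, Module.End.one_apply] at hw
    rw [hw, map_zero]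
  | succ j ih =>
    intro w hw
    have h1 : (B ^ j) (B w) = 0 := by
      rw [← Module.End.mul_apply, ← pow_succ]
      exact hw
    have h2 : B w ∈ U := by rw [hU, LinearMap.mem_ker]; exact ih (B w) h1
    have hwmem : w ∈ U ⊔ W' := by rw [hcompl.sup_eq_top]; trivial
    obtain ⟨p, hp, q, hq, hpq⟩ := Submodule.mem_sup.mp hwmem
    have hBp : B p = 0 := by rw [hU, LinearMap.mem_ker] at hp; exact hp
    have hBw : B w ∈ W' := by
      have : B w = B q := by rw [← hpq, map_add, hBp, zero_add]
      rw [this]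
      exact hW'B q hq
    have hbot : B w ∈ (⊥ : Submodule ℂ g1) :=
      hcompl.disjoint.le_bot (Submodule.mem_inf.mpr ⟨h2, hBw⟩)
    rwa [Submodule.mem_bot] at hbot

/-- The subspace `{X ∈ g₁ | [X, g₁] ⊆ z(g)₀}`. -/
def Zset (S : SuperStructure g0 g1) : Submodule ℂ g1 where
  carrier := {X | ∀ Y : g1, (∀ z : g0, ⁅S.b11 X Y, z⁆ = 0) ∧
    ∀ v : g1, S.b01 (S.b11 X Y) v = 0}
  add_mem' := by
    intro a b ha hb
    intro Y
    have key : S.b11 (a + b) Y = S.b11 a Y + S.b11 b Y := by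
      rw [map_add, LinearMap.add_apply]
    constructor
    · intro z; rw [key, add_lie, (ha Y).1 z, (hb Y).1 z, add_zero]
    · intro v; rw [key, map_add, LinearMap.add_apply, (ha Y).2 v, (hb Y).2 v, add_zero]
  zero_mem' := by
    intro Y
    have key : S.b11 (0 : g1) Y = 0 := by rw [map_zero, LinearMap.zero_apply]
    constructor
    · intro z; rw [key, zero_lie]
    · intro v; rw [key, map_zero, LinearMap.zero_apply]
  smul_mem' := by
    intro c a ha Y
    have key : S.b11 (c • a) Y = c • S.b11 a Y := by rw [map_smul, LinearMap.smul_apply]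
    constructor
    · intro z; rw [key, smul_lie, (ha Y).1 z, smul_zero]
    · intro v; rw [key, map_smul, LinearMap.smul_apply, (ha Y).2 v, smul_zero]

lemma mem_Zset {S : SuperStructure g0 g1} {X : g1} :
    X ∈ Zset S ↔ ∀ Y : g1, (∀ z : g0, ⁅S.b11 X Y, z⁆ = 0) ∧
      ∀ v : g1, S.b01 (S.b11 X Y) v = 0 := Iff.rfl

/-- The subspace of `g₀` consisting of elements that are central in `g₀` and act trivially
on `g₁`. -/
def C0set (S : SuperStructure g0 g1) : Submodule ℂ g0 where
  carrier := {x | (∀ z : g0, ⁅x, z⁆ = 0) ∧ ∀ v : g1, S.b01 x v = 0}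
  add_mem' := by
    intro a b ha hb
    constructor
    · intro z; rw [add_lie, ha.1 z, hb.1 z, add_zero]
    · intro v; rw [map_add, LinearMap.add_apply, ha.2 v, hb.2 v, add_zero]
  zero_mem' := by
    constructor
    · intro z; rw [zero_lie]
    · intro v; rw [map_zero, LinearMap.zero_apply]
  smul_mem' := by
    intro c a ha
    constructor
    · intro z; rw [smul_lie, ha.1 z, smul_zero]
    · intro v; rw [map_smul, LinearMap.smul_apply, ha.2 v, smul_zero]

lemma mem_C0set {S : SuperStructure g0 g1} {x : g0} :
    x ∈ C0set S ↔ (∀ z : g0, ⁅x, z⁆ = 0) ∧ ∀ v : g1, S.b01 x v = 0 := Iff.rfl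

/-- The super ideal `(C0set S, Zset S)`. -/
def ZIdeal (S : SuperStructure g0 g1) : SuperIdeal S where
  even := C0set S
  odd := Zset S
  lie00 := by
    intro x y hy
    have : ⁅x, y⁆ = (0 : g0) := by rw [← lie_skew, hy.1 x, neg_zero]
    rw [this]
    exact zero_mem _
  lie01 := by
    intro x v hv
    rw [mem_Zset]
    intro Y
    have key : S.b11 (S.b01 x v) Y = -(S.b11 v (S.b01 x Y)) := by
      have h := S.jacobi011 x v Y
      have hz : ⁅x, S.b11 v Y⁆ = (0 : g0) := by
        rw [← lie_skew, (hv Y).1 x, neg_zero]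
      rw [hz] at h
      exact eq_neg_of_add_eq_zero_left h.symm
    constructor
    · intro z
      rw [key, neg_lie, (hv (S.b01 x Y)).1 z, neg_zero]
    · intro w
      rw [key, map_neg, LinearMap.neg_apply, (hv (S.b01 x Y)).2 w, neg_zero]
  lie11 := by
    intro u v hv
    rw [mem_C0set, S.symm11]
    exact hv u
  lie10 := by
    intro x hx v
    have : S.b01 x v = 0 := hx.2 v
    rw [this]
    exact zero_mem _

lemma ZIdeal_solvable (S : SuperStructure g0 g1) : IsSolvableIdeal S (ZIdeal S) := by
  refine ⟨2, ?_⟩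
  have h2 : (derivedPair S)^[2] ((ZIdeal S).even, (ZIdeal S).odd)
      = derivedPair S (derivedPair S ((ZIdeal S).even, (ZIdeal S).odd)) := rfl
  set q := derivedPair S ((ZIdeal S).even, (ZIdeal S).odd) with hq
  have hq2 : q.2 = ⊥ := by
    rw [hq]
    apply le_bot_iff.mp
    apply Submodule.span_le.mpr
    rintro w ⟨x, hx, v, hv, rfl⟩
    have : S.b01 x v = 0 := hx.2 v
    rw [SetLike.mem_coe, this, Submodule.mem_bot]
  have hq1 : q.1 ≤ C0set S := by
    rw [hq]
    apply Submodule.span_le.mpr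
    rintro z (⟨x, hx, y, hy, rfl⟩ | ⟨u, hu, v, hv, rfl⟩)
    · have : ⁅x, y⁆ = (0 : g0) := hx.1 y
      rw [SetLike.mem_coe, this]
      exact zero_mem _
    · rw [SetLike.mem_coe, S.symm11]
      exact hv u
  rw [h2]
  have he : (derivedPair S q).1 = ⊥ := by
    apply le_bot_iff.mp
    apply Submodule.span_le.mpr
    rintro z (⟨x, hx, y, hy, rfl⟩ | ⟨u, hu, v, hv, rfl⟩)
    · have : ⁅x, y⁆ = (0 : g0) := (hq1 hx).1 y
      rw [SetLike.mem_coe, this, Submodule.mem_bot]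
    · rw [hq2, Submodule.mem_bot] at hu
      rw [SetLike.mem_coe, hu, Submodule.mem_bot, map_zero, LinearMap.zero_apply]
  have ho : (derivedPair S q).2 = ⊥ := by
    apply le_bot_iff.mp
    apply Submodule.span_le.mpr
    rintro w ⟨x, hx, v, hv, rfl⟩
    rw [hq2, Submodule.mem_bot] at hv
    rw [SetLike.mem_coe, hv, Submodule.mem_bot, map_zero]
  rw [Prod.ext_iff]
  exact ⟨he, ho⟩

/-- Key induction: the odd part of any solvable super ideal is contained in `Zset S`. -/
lemma odd_le_Zset [FiniteDimensional ℂ g1] (S : SuperStructure g0 g1)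
    (hcr0 : ∀ W : LieSubmodule ℂ g0 g0, ∃ W', IsCompl W W')
    (hcr1 : ∀ W : Submodule ℂ g1, (∀ (x : g0), ∀ v ∈ W, S.b01 x v ∈ W) →
      ∃ W' : Submodule ℂ g1, (∀ (x : g0), ∀ v ∈ W', S.b01 x v ∈ W') ∧ IsCompl W W') :
    ∀ k : ℕ, ∀ I : SuperIdeal S,
      (derivedPair S)^[k] (I.even, I.odd) = (⊥, ⊥) → I.odd ≤ Zset S := by
  intro k
  induction k with
  | zero =>
    intro I h
    have : I.odd = ⊥ := congrArg Prod.snd h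
    rw [this]
    exact bot_le
  | succ k ih =>
    intro I h X hX
    -- every element of `I.even` is central in `g₀`
    have hceven : ∀ x ∈ I.even, ∀ z : g0, ⁅x, z⁆ = 0 := by
      apply central_of_solvable hcr0 (k + 1) I.even (fun z y hy => I.lie00 z y hy)
      have h1 : bracketSpan^[k + 1] I.even
          ≤ ((derivedPair S)^[k + 1] (I.even, I.odd)).1 := evenSolv S (k + 1) (I.even, I.odd)
      rw [h] at h1
      exact le_bot_iff.mp h1
    -- the derived ideal satisfies the induction hypothesis
    have hI' : (derivedIdeal S I).odd ≤ Zset S := by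
      apply ih
      have hpair : ((derivedIdeal S I).even, (derivedIdeal S I).odd)
          = derivedPair S (I.even, I.odd) := rfl
      rw [hpair, ← Function.iterate_succ_apply]
      exact h
    rw [mem_Zset]
    intro Y
    have hxE : S.b11 X Y ∈ I.even := by rw [S.symm11]; exact I.lie11 Y X hX
    have hcent : ∀ z : g0, ⁅S.b11 X Y, z⁆ = 0 := hceven _ hxE
    refine ⟨hcent, ?_⟩
    set x : g0 := S.b11 X Y with hx
    set A : Module.End ℂ g1 := (S.b01 x : Module.End ℂ g1) with hA
    -- no nonzero eigenvalues
    have heig : ∀ lam : ℂ, lam ≠ 0 → ∀ u : g1, A u = lam • u → u = 0 := by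
      intro lam hlam u hu
      have hAuodd : S.b01 x u ∈ I.odd := I.lie10 x hxE u
      have hueq : u = lam⁻¹ • A u := by
        rw [hu, smul_smul, inv_mul_cancel₀ hlam, one_smul]
      have huI : u ∈ I.odd := by
        rw [hueq]
        exact Submodule.smul_mem _ _ hAuodd
      have hAu' : A u ∈ (derivedIdeal S I).odd :=
        Submodule.subset_span ⟨x, hxE, u, huI, rfl⟩
      have huZ : u ∈ Zset S := by
        apply hI'
        rw [hueq]
        exact Submodule.smul_mem _ _ hAu'
      rw [mem_Zset] at huZ
      have hjac := S.jacobi111 X Y u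
      have ht2 : S.b01 (S.b11 Y u) X = 0 := by
        rw [S.symm11 Y u]
        exact (huZ Y).2 X
      have hzero : S.b01 (S.b11 X Y) u = 0 := by
        rw [ht2, (huZ X).2 Y, add_zero, add_zero] at hjac
        exact hjac
      have : A u = 0 := hzero
      rw [this] at hu
      exact (smul_eq_zero_iff_right hlam).mp hu.symm
    -- semisimplicity
    have hss := semisimple_op S hcr1 x hcent
    intro v
    have htop := Module.End.iSup_maxGenEigenspace_eq_top A
    have hv : v ∈ ⨆ μ : ℂ, A.maxGenEigenspace μ := by rw [htop]; trivial
    have hle : (⨆ μ : ℂ, A.maxGenEigenspace μ) ≤ LinearMap.ker A := by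
      refine iSup_le fun μ w hw => ?_
      rw [Module.End.mem_maxGenEigenspace] at hw
      obtain ⟨j, hj⟩ := hw
      have hsw : (A - μ • 1) w = 0 := hss μ j w hj
      have hAw : A w = μ • w := by
        rw [LinearMap.sub_apply, LinearMap.smul_apply, Module.End.one_apply,
          sub_eq_zero] at hsw
        exact hsw
      rw [LinearMap.mem_ker]
      by_cases hmu : μ = 0
      · rw [hAw, hmu, zero_smul]
      · rw [heig μ hmu w hAw, map_zero]
    exact LinearMap.mem_ker.mp (hle hv)

end Stmt7Aux

/-- Let `g = g₀ ⊕ g₁` be a finite-dimensional classical Lie superalgebra over `ℂ` (the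
adjoint action of `g₀` on `g₀` and on `g₁` is completely reducible).  Then the odd part of
the radical of `g` (the sum of all solvable ideals) equals
`{X ∈ g₁ | [X, g₁] ⊆ z(g)₀}`, where `z(g)₀` is the even part of the centre of `g`. -/
theorem stmt7 [FiniteDimensional ℂ g0] [FiniteDimensional ℂ g1]
    (S : SuperStructure g0 g1)
    (hcr0 : ∀ W : LieSubmodule ℂ g0 g0, ∃ W', IsCompl W W')
    (hcr1 : ∀ W : Submodule ℂ g1, (∀ (x : g0), ∀ v ∈ W, S.b01 x v ∈ W) →
      ∃ W' : Submodule ℂ g1, (∀ (x : g0), ∀ v ∈ W', S.b01 x v ∈ W') ∧ IsCompl W W') :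
    ∀ X : g1,
      (X ∈ ⨆ (I : SuperIdeal S) (_ : IsSolvableIdeal S I), I.odd) ↔
        ∀ Y : g1, (∀ z : g0, ⁅S.b11 X Y, z⁆ = 0) ∧ ∀ v : g1, S.b01 (S.b11 X Y) v = 0 := by
  intro X
  constructor
  · intro hX
    have hsup : (⨆ (I : SuperIdeal S) (_ : IsSolvableIdeal S I), I.odd) ≤ Stmt7Aux.Zset S := by
      refine iSup_le fun I => iSup_le fun hs => ?_
      obtain ⟨k, hk⟩ := hs
      exact Stmt7Aux.odd_le_Zset S hcr0 hcr1 k I hk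
    exact (Stmt7Aux.mem_Zset).mp (hsup hX)
  · intro hprop
    have hXZ : X ∈ (Stmt7Aux.ZIdeal S).odd := (Stmt7Aux.mem_Zset).mpr hprop
    have h1 : (Stmt7Aux.ZIdeal S).odd
        ≤ ⨆ (_ : IsSolvableIdeal S (Stmt7Aux.ZIdeal S)), (Stmt7Aux.ZIdeal S).odd :=
      le_iSup (fun _ => (Stmt7Aux.ZIdeal S).odd) (Stmt7Aux.ZIdeal_solvable S)
    have h2 : (⨆ (_ : IsSolvableIdeal S (Stmt7Aux.ZIdeal S)), (Stmt7Aux.ZIdeal S).odd)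
        ≤ ⨆ (I : SuperIdeal S) (_ : IsSolvableIdeal S I), I.odd :=
      le_iSup (fun I => ⨆ (_ : IsSolvableIdeal S I), I.odd) (Stmt7Aux.ZIdeal S)
    exact h2 (h1 hXZ)
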